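/- arXiv:2403.00958 — 2 statements merged into one kernel-verified Lean document; each statement's English description precedes it below -/
import Mathlib

section
/- If P is a type-C poset of height one whose relation graph RG(P) has connected components K_1,…,K_m, then the Lie algebra g_C(P) is isomorphic to the direct sum of the Lie algebras g_C(P_{K_i}), i = 1,…,m, where P_{K_i} is the unique type-C poset with RG(P_{K_i}) = K_i. -/
open scoped DirectSum

namespace LiePoset

/-- A type-C poset on the ground set `{-n, …, -1, 1, …, n} ⊆ ℤ`:
a partial order `le` supported on that set such that `i ≼ j` implies `i ≤ j` in `ℤ`,
and for `i ≠ -j`, `i ≼ j ↔ -j ≼ -i`. -/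
structure TypeCPoset (n : ℕ) where
  le : ℤ → ℤ → Prop
  supp : ∀ ⦃i j : ℤ⦄, le i j → i ≠ 0 ∧ |i| ≤ (n : ℤ) ∧ j ≠ 0 ∧ |j| ≤ (n : ℤ)
  refl : ∀ i : ℤ, i ≠ 0 → |i| ≤ (n : ℤ) → le i i
  antisymm : ∀ ⦃i j : ℤ⦄, le i j → le j i → i = j
  trans : ∀ ⦃i j k : ℤ⦄, le i j → le j k → le i k
  compat : ∀ ⦃i j : ℤ⦄, le i j → i ≤ j
  nsymm : ∀ ⦃i j : ℤ⦄, i ≠ -j → (le i j ↔ le (-j) (-i))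

namespace TypeCPoset

variable {n : ℕ}

/-- The strict relation `i ≺ j` of a type-C poset. -/
def lt (P : TypeCPoset n) (i j : ℤ) : Prop := P.le i j ∧ i ≠ j

/-- `P` has height one: every chain of `P` has cardinality at most two. -/
def HeightOne (P : TypeCPoset n) : Prop := ∀ i j k : ℤ, P.lt i j → P.lt j k → False

/-- `P` is separable: there is no relation `x ≺ y` with `x` negative and `y` positive. -/
def Separable (P : TypeCPoset n) : Prop := ∀ i j : ℤ, i < 0 → 0 < j → ¬ P.lt i j

/-- `P` has height `(1,1)`: `P⁺` has height exactly one and `P` has height exactly one. -/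
def Height11 (P : TypeCPoset n) : Prop :=
  P.HeightOne ∧ ∃ i j : ℤ, 0 < i ∧ 0 < j ∧ P.lt i j

/-- `P` has height `(0,1)`: `P⁺` has height zero and `P` has height exactly one. -/
def Height01 (P : TypeCPoset n) : Prop :=
  P.HeightOne ∧ (∀ i j : ℤ, 0 < i → 0 < j → ¬ P.lt i j) ∧ ∃ i j : ℤ, P.lt i j

end TypeCPoset

/-- The vertex set of the relation graph: the positive elements `{1, …, n}`. -/
abbrev Pos (n : ℕ) : Type := {i : ℤ // i ∈ Finset.Icc (1 : ℤ) (n : ℤ)}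

/-- The matrix index set `{-n, …, -1, 1, …, n}`. -/
abbrev Idx (n : ℕ) : Type := {i : ℤ // i ∈ (Finset.Icc (-(n : ℤ)) (n : ℤ)).erase 0}

/-- Negation on the index set. -/
def Idx.neg {n : ℕ} (a : Idx n) : Idx n :=
  ⟨-a.val, by
    have h := a.property
    simp only [Finset.mem_erase, Finset.mem_Icc] at h ⊢
    omega⟩

/-- A positive vertex as a matrix index. -/
def Pos.toIdx {n : ℕ} (i : Pos n) : Idx n :=
  ⟨i.val, by
    have h := i.property
    simp only [Finset.mem_erase, Finset.mem_Icc] at h ⊢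
    omega⟩

/-- `2n × 2n` complex matrices, with rows and columns indexed by `{-n, …, -1, 1, …, n}`. -/
abbrev Mat (n : ℕ) : Type := Matrix (Idx n) (Idx n) ℂ

namespace TypeCPoset

variable {n : ℕ}

/-- `D_i = E_{-i,-i} - E_{i,i}`. -/
def Dmat (i : Pos n) : Mat n :=
  Matrix.single i.toIdx.neg i.toIdx.neg 1 - Matrix.single i.toIdx i.toIdx 1

/-- `R^±_{i,j} = E_{-i,j} + E_{-j,i}`. -/
def Rpm (i j : Pos n) : Mat n :=
  Matrix.single i.toIdx.neg j.toIdx 1 + Matrix.single j.toIdx.neg i.toIdx 1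

/-- `R_{i,j} = E_{-j,-i} - E_{i,j}`. -/
def Rdash (i j : Pos n) : Mat n :=
  Matrix.single j.toIdx.neg i.toIdx.neg 1 - Matrix.single i.toIdx j.toIdx 1

/-- `E_{-i,i}`. -/
def Eloop (i : Pos n) : Mat n := Matrix.single i.toIdx.neg i.toIdx 1

/-- The standard spanning set of the type-C Lie poset algebra `g_C(P)`. -/
def gcSet (P : TypeCPoset n) : Set (Mat n) :=
  {M | (∃ i : Pos n, M = Dmat i)
      ∨ (∃ i j : Pos n, P.lt (-j.val) (-i.val) ∧ M = Rdash i j)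
      ∨ (∃ i j : Pos n, P.lt (-i.val) j.val ∧ P.lt (-j.val) i.val ∧ M = Rpm i j)
      ∨ (∃ i : Pos n, P.lt (-i.val) i.val ∧ M = Eloop i)}

/-- The simple graph underlying the relation graph `RG(P)`:
vertices `{1, …, n}`, with `i` adjacent to `j` (for `i ≠ j`) whenever there is a
(dashed or non-dashed) edge between them. -/
def RG (P : TypeCPoset n) : SimpleGraph (Pos n) where
  Adj i j := i ≠ j ∧ (P.lt (-i.val) j.val ∨ P.lt (-j.val) i.val ∨
      P.lt (-i.val) (-j.val) ∨ P.lt (-j.val) (-i.val))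
  symm := by
    constructor
    intro i j h
    exact ⟨h.1.symm, by tauto⟩
  loopless := by
    constructor
    intro i h
    exact h.1 rfl

/-- `RG(P)` has a (non-dashed) self-loop at vertex `i`, i.e. `-i ≺ i`. -/
def HasLoopAt (P : TypeCPoset n) (i : Pos n) : Prop := P.lt (-i.val) i.val

/-- There is a dashed edge `{i,j}` in `RG(P)`. -/
def DashedEdge (P : TypeCPoset n) (i j : Pos n) : Prop :=
  P.lt (-i.val) (-j.val) ∨ P.lt (-j.val) (-i.val)

/-- There is a non-dashed edge `{i,j}` in `RG(P)` (a self-loop when `i = j`). -/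
def NonDashedEdge (P : TypeCPoset n) (i j : Pos n) : Prop :=
  P.lt (-i.val) j.val ∨ P.lt (-j.val) i.val

open scoped Classical in
/-- The set of non-dashed edges of `RG(P)` (including self-loops). -/
noncomputable def edgesND (P : TypeCPoset n) : Finset (Sym2 (Pos n)) :=
  Finset.univ.filter fun e => ∃ i j : Pos n, e = s(i, j) ∧ NonDashedEdge P i j

open scoped Classical in
/-- The set of dashed edges of `RG(P)`. -/
noncomputable def edgesD (P : TypeCPoset n) : Finset (Sym2 (Pos n)) :=
  Finset.univ.filter fun e => ∃ i j : Pos n, e = s(i, j) ∧ i ≠ j ∧ DashedEdge P i j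

/-- `|E(P)|`, the number of edges of `RG(P)`. -/
noncomputable def numEdges (P : TypeCPoset n) : ℕ := (P.edgesND).card + (P.edgesD).card

/-- The cycles of `RG(P)`, recorded by their edge sets: a self-loop at `v`, or a cycle
of the underlying simple graph.  A cycle has an odd (resp. even) number of vertices
iff its edge set has odd (resp. even) cardinality. -/
def cycles (P : TypeCPoset n) : Set (Finset (Sym2 (Pos n))) :=
  {s | ∃ v : Pos n, P.HasLoopAt v ∧ s = {s(v, v)}} ∪
  {s | ∃ (v : Pos n) (p : (RG P).Walk v v), p.IsCycle ∧ s = p.edges.toFinset}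

/-- The cycles of `RG(P)` contained in the connected component `c`. -/
def cyclesIn (P : TypeCPoset n) (c : (RG P).ConnectedComponent) :
    Set (Finset (Sym2 (Pos n))) :=
  {s | ∃ v : Pos n, (RG P).connectedComponentMk v = c ∧
    ((P.HasLoopAt v ∧ s = {s(v, v)}) ∨
      ∃ p : (RG P).Walk v v, p.IsCycle ∧ s = p.edges.toFinset)}

/-- `η(P)`: the number of connected components of `RG(P)` containing no odd cycles. -/
noncomputable def eta (P : TypeCPoset n) : ℕ :=
  Nat.card {c : (RG P).ConnectedComponent // ¬ ∃ s ∈ P.cyclesIn c, Odd s.card}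

/-- The vertices visited by a cycle, recorded by its edge set. -/
def cycleVerts (s : Finset (Sym2 (Pos n))) : Set (Pos n) := {v | ∃ e ∈ s, v ∈ e}

end TypeCPoset

section LieDefs

variable (L : Type*) [LieRing L] [LieAlgebra ℂ L]

/-- The kernel of the bilinear form `B_φ(x, y) = φ⁅x, y⁆`. -/
def coadjKernel (φ : Module.Dual ℂ L) : Submodule ℂ L where
  carrier := {x | ∀ y : L, φ ⁅x, y⁆ = 0}
  add_mem' := by
    intro a b ha hb y
    simp only [Set.mem_setOf_eq] at ha hb ⊢
    rw [add_lie, map_add, ha y, hb y, add_zero]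
  zero_mem' := by
    intro y
    rw [zero_lie, map_zero]
  smul_mem' := by
    intro c x hx y
    simp only [Set.mem_setOf_eq] at hx ⊢
    rw [smul_lie, map_smul, hx y, smul_zero]

/-- The index of a Lie algebra: `ind g = min_{φ ∈ g*} dim ker(B_φ)`. -/
noncomputable def lieIndex : ℕ :=
  sInf (Set.range fun φ : Module.Dual ℂ L => Module.finrank ℂ (coadjKernel L φ))

/-- `φ` is a contact form on `L`: `L` is odd-dimensional and the restriction of
`B_φ(x, y) = φ⁅x, y⁆` to `ker φ` is nondegenerate. -/
def IsContactForm (φ : Module.Dual ℂ L) : Prop :=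
  Odd (Module.finrank ℂ L) ∧
    ∀ x : L, φ x = 0 → (∀ y : L, φ y = 0 → φ ⁅x, y⁆ = 0) → x = 0

/-- `L` is a contact Lie algebra. -/
def IsContact : Prop := ∃ φ : Module.Dual ℂ L, IsContactForm L φ

end LieDefs

end LiePoset

namespace LiePoset

attribute [local instance] LieRing.ofAssociativeRing

/-- The generators of `g_C(P)` associated with the connected component `c` of `RG(P)`;
their span is (the copy inside `g_C(P)` of) `g_C(P_K)` for `K = c`. -/
def TypeCPoset.gcSetComp {n : ℕ} (P : TypeCPoset n)
    (c : (TypeCPoset.RG P).ConnectedComponent) : Set (Mat n) :=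
  {M | (∃ i : Pos n, (TypeCPoset.RG P).connectedComponentMk i = c ∧ M = TypeCPoset.Dmat i)
      ∨ (∃ i j : Pos n, (TypeCPoset.RG P).connectedComponentMk i = c ∧
          P.lt (-j.val) (-i.val) ∧ M = TypeCPoset.Rdash i j)
      ∨ (∃ i j : Pos n, (TypeCPoset.RG P).connectedComponentMk i = c ∧
          P.lt (-i.val) j.val ∧ P.lt (-j.val) i.val ∧ M = TypeCPoset.Rpm i j)
      ∨ (∃ i : Pos n, (TypeCPoset.RG P).connectedComponentMk i = c ∧
          P.lt (-i.val) i.val ∧ M = TypeCPoset.Eloop i)}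

section Aux

variable {n : ℕ}

/-- The positive vertex underlying a matrix index. -/
def posOf (a : Idx n) : Pos n :=
  ⟨|a.val|, by
    have h := a.property
    simp only [Finset.mem_erase, Finset.mem_Icc] at h ⊢
    rcases abs_cases a.val with ⟨h1, h2⟩ | ⟨h1, h2⟩ <;> omega⟩

lemma posOf_toIdx (i : Pos n) : posOf i.toIdx = i := by
  have h := i.property
  simp only [Finset.mem_Icc] at h
  apply Subtype.ext
  show |i.val| = i.val
  exact abs_of_pos (by omega)

lemma posOf_toIdx_neg (i : Pos n) : posOf i.toIdx.neg = i := by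
  have h := i.property
  simp only [Finset.mem_Icc] at h
  apply Subtype.ext
  show |(-i.val)| = i.val
  rw [abs_neg]; exact abs_of_pos (by omega)

/-- Matrices supported (in both row and column indices) on a fixed connected component. -/
noncomputable def Supp (P : TypeCPoset n) (c : (TypeCPoset.RG P).ConnectedComponent) : Submodule ℂ (Mat n) where
  carrier := {M | ∀ a b : Idx n, M a b ≠ 0 →
      (TypeCPoset.RG P).connectedComponentMk (posOf a) = c ∧
      (TypeCPoset.RG P).connectedComponentMk (posOf b) = c}
  add_mem' := by
    intro M N hM hN a b hab
    by_cases h1 : M a b = 0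
    · exact hN a b (by simpa [Matrix.add_apply, h1] using hab)
    · exact hM a b h1
  zero_mem' := by intro a b hab; simp at hab
  smul_mem' := by
    intro r M hM a b hab
    refine hM a b fun h => hab ?_
    simp [Matrix.smul_apply, h]

/-- Matrices whose rows avoid a fixed connected component. -/
noncomputable def OffComp (P : TypeCPoset n) (c : (TypeCPoset.RG P).ConnectedComponent) :
    Submodule ℂ (Mat n) where
  carrier := {M | ∀ a b : Idx n, M a b ≠ 0 →
      (TypeCPoset.RG P).connectedComponentMk (posOf a) ≠ c}
  add_mem' := by
    intro M N hM hN a b hab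
    by_cases h1 : M a b = 0
    · exact hN a b (by simpa [Matrix.add_apply, h1] using hab)
    · exact hM a b h1
  zero_mem' := by intro a b hab; simp at hab
  smul_mem' := by
    intro r M hM a b hab
    refine hM a b fun h => hab ?_
    simp [Matrix.smul_apply, h]

lemma std_mem_Supp (P : TypeCPoset n) (c : (TypeCPoset.RG P).ConnectedComponent)
    (p q : Idx n) (hp : (TypeCPoset.RG P).connectedComponentMk (posOf p) = c)
    (hq : (TypeCPoset.RG P).connectedComponentMk (posOf q) = c) :
    Matrix.single p q (1 : ℂ) ∈ Supp P c := by
  intro a b hab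
  have h : p = a ∧ q = b := by
    by_contra h
    exact hab (Matrix.single_apply_of_ne p q 1 a b h)
  obtain ⟨rfl, rfl⟩ := h
  exact ⟨hp, hq⟩

lemma Supp_subset (P : TypeCPoset n) (c : (TypeCPoset.RG P).ConnectedComponent) :
    TypeCPoset.gcSetComp P c ⊆ (Supp P c : Set (Mat n)) := by
  rintro M (⟨i, hi, rfl⟩ | ⟨i, j, hi, hlt, rfl⟩ | ⟨i, j, hi, h1, h2, rfl⟩ | ⟨i, hi, hlt, rfl⟩)
  · exact sub_mem (std_mem_Supp P c _ _ (by rw [posOf_toIdx_neg, hi]) (by rw [posOf_toIdx_neg, hi]))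
      (std_mem_Supp P c _ _ (by rw [posOf_toIdx, hi]) (by rw [posOf_toIdx, hi]))
  · have hij : i ≠ j := by
      intro h; exact hlt.2 (by rw [h])
    have hadj : (TypeCPoset.RG P).Adj i j := ⟨hij, Or.inr (Or.inr (Or.inr hlt))⟩
    have hj : (TypeCPoset.RG P).connectedComponentMk j = c := by
      rw [← hi]
      exact (SimpleGraph.ConnectedComponent.sound hadj.symm.reachable)
    exact sub_mem
      (std_mem_Supp P c _ _ (by rw [posOf_toIdx_neg, hj]) (by rw [posOf_toIdx_neg, hi]))
      (std_mem_Supp P c _ _ (by rw [posOf_toIdx, hi]) (by rw [posOf_toIdx, hj]))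
  · have hj : (TypeCPoset.RG P).connectedComponentMk j = c := by
      by_cases hij : i = j
      · rw [← hij, hi]
      · have hadj : (TypeCPoset.RG P).Adj i j := ⟨hij, Or.inl h1⟩
        rw [← hi]
        exact (SimpleGraph.ConnectedComponent.sound hadj.symm.reachable)
    exact add_mem
      (std_mem_Supp P c _ _ (by rw [posOf_toIdx_neg, hi]) (by rw [posOf_toIdx, hj]))
      (std_mem_Supp P c _ _ (by rw [posOf_toIdx_neg, hj]) (by rw [posOf_toIdx, hi]))
  · exact std_mem_Supp P c _ _ (by rw [posOf_toIdx_neg, hi]) (by rw [posOf_toIdx, hi])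

lemma Supp_mul_eq_zero (P : TypeCPoset n) {c c' : (TypeCPoset.RG P).ConnectedComponent}
    (hcc : c ≠ c') {M N : Mat n} (hM : M ∈ Supp P c) (hN : N ∈ Supp P c') : M * N = 0 := by
  ext a b
  rw [Matrix.mul_apply]
  refine (Finset.sum_eq_zero fun k _ => ?_).trans rfl.symm.symm
  by_contra h
  have h1 := (hM a k (left_ne_zero_of_mul h)).2
  have h2 := (hN k b (right_ne_zero_of_mul h)).1
  exact hcc (h1.symm.trans h2)

lemma Supp_lie_eq_zero (P : TypeCPoset n) {c c' : (TypeCPoset.RG P).ConnectedComponent}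
    (hcc : c ≠ c') {M N : Mat n} (hM : M ∈ Supp P c) (hN : N ∈ Supp P c') : ⁅M, N⁆ = 0 := by
  rw [Ring.lie_def, Supp_mul_eq_zero P hcc hM hN, Supp_mul_eq_zero P hcc.symm hN hM, sub_zero]

end Aux

/-- **Lemma (decomposition).** If `P` is a type-C poset of height one whose relation
graph has connected components `K₁, …, K_m`, then `g_C(P)` is isomorphic, as a Lie
algebra, to the direct sum of the Lie poset algebras `g_C(P_{K_i})`. -/
theorem gc_direct_sum_decomposition (n : ℕ) (P : TypeCPoset n) (hP : P.HeightOne)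
    (g : LieSubalgebra ℂ (Mat n))
    (hg : g.toSubmodule = Submodule.span ℂ (TypeCPoset.gcSet P))
    (gc : (TypeCPoset.RG P).ConnectedComponent → LieSubalgebra ℂ (Mat n))
    (hgc : ∀ c, (gc c).toSubmodule = Submodule.span ℂ (TypeCPoset.gcSetComp P c)) :
    Nonempty (↥g ≃ₗ⁅ℂ⁆ ⨁ c : (TypeCPoset.RG P).ConnectedComponent, ↥(gc c)) := by
  classical
  -- each `gc c` lies inside `Supp P c`
  have hsupp : ∀ c, (gc c).toSubmodule ≤ Supp P c := by
    intro c
    rw [hgc c]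
    exact Submodule.span_le.2 (Supp_subset P c)
  -- each component set is contained in the global set
  have hsub : ∀ c, TypeCPoset.gcSetComp P c ⊆ TypeCPoset.gcSet P := by
    rintro c M (⟨i, _, rfl⟩ | ⟨i, j, _, hlt, rfl⟩ | ⟨i, j, _, h1, h2, rfl⟩ | ⟨i, _, hlt, rfl⟩)
    · exact Or.inl ⟨i, rfl⟩
    · exact Or.inr (Or.inl ⟨i, j, hlt, rfl⟩)
    · exact Or.inr (Or.inr (Or.inl ⟨i, j, h1, h2, rfl⟩))
    · exact Or.inr (Or.inr (Or.inr ⟨i, hlt, rfl⟩))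
  have hle : ∀ c, (gc c).toSubmodule ≤ g.toSubmodule := by
    intro c
    rw [hgc c, hg]
    exact Submodule.span_mono (hsub c)
  -- the canonical linear map from the direct sum
  set A : (TypeCPoset.RG P).ConnectedComponent → Submodule ℂ (Mat n) :=
    fun c => (gc c).toSubmodule with hA
  have hindep : iSupIndep A := by
    have hSuppIndep : iSupIndep fun c => Supp P c := by
      intro c
      have h1 : (⨆ (c' : (TypeCPoset.RG P).ConnectedComponent) (_ : c' ≠ c), Supp P c')
          ≤ OffComp P c := by
        refine iSup_le fun c' => iSup_le fun hc' M hM => ?_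
        intro a b hab
        rw [(hM a b hab).1]
        exact hc'
      refine Disjoint.mono_right h1 ?_
      rw [Submodule.disjoint_def]
      intro M hM hM'
      ext a b
      by_contra h
      exact (hM' a b h) (hM a b h).1
    exact hSuppIndep.mono hsupp
  -- the canonical linear map from the direct sum
  set Ψ : (⨁ c : (TypeCPoset.RG P).ConnectedComponent, ↥(gc c)) →ₗ[ℂ] Mat n :=
    DirectSum.coeLinearMap A with hΨ
  have hof : ∀ (c : (TypeCPoset.RG P).ConnectedComponent) (m : ↥(gc c)),
      Ψ (DirectSum.of (fun c => ↥(gc c)) c m) = (m : Mat n) := fun c m =>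
    DirectSum.coeLinearMap_of A c m
  have hinj : Function.Injective Ψ := hindep.dfinsupp_lsum_injective
  have hrange : LinearMap.range Ψ = g.toSubmodule := by
    rw [hΨ]
    rw [show LinearMap.range (DirectSum.coeLinearMap A) = ⨆ c, A c from
      DirectSum.range_coeLinearMap]
    apply le_antisymm
    · exact iSup_le hle
    · rw [hg]
      refine Submodule.span_le.2 fun M hM => ?_
      have hex : ∃ c, M ∈ TypeCPoset.gcSetComp P c := by
        rcases hM with ⟨i, rfl⟩ | ⟨i, j, hlt, rfl⟩ | ⟨i, j, h1, h2, rfl⟩ | ⟨i, hlt, rfl⟩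
        · exact ⟨_, Or.inl ⟨i, rfl, rfl⟩⟩
        · exact ⟨_, Or.inr (Or.inl ⟨i, j, rfl, hlt, rfl⟩)⟩
        · exact ⟨_, Or.inr (Or.inr (Or.inl ⟨i, j, rfl, h1, h2, rfl⟩))⟩
        · exact ⟨_, Or.inr (Or.inr (Or.inr ⟨i, rfl, hlt, rfl⟩))⟩
      obtain ⟨c, hc⟩ := hex
      have hMc : M ∈ A c := by
        show M ∈ (gc c).toSubmodule
        rw [hgc c]
        exact Submodule.subset_span hc
      exact le_iSup A c hMc
  -- lift to a map into `g`
  have hmem : ∀ x, Ψ x ∈ g.toSubmodule := by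
    intro x
    have hx : Ψ x ∈ LinearMap.range Ψ := LinearMap.mem_range_self _ x
    rwa [hrange] at hx
  set Φ : (⨁ c : (TypeCPoset.RG P).ConnectedComponent, ↥(gc c)) →ₗ[ℂ] ↥g :=
    LinearMap.codRestrict g.toSubmodule Ψ hmem with hΦ
  have hΦinj : Function.Injective Φ := by
    intro x y hxy
    exact hinj (congrArg Subtype.val hxy)
  have hΦsurj : Function.Surjective Φ := by
    intro y
    have hy : (y : Mat n) ∈ LinearMap.range Ψ := by
      rw [hrange]; exact y.2
    obtain ⟨x, hx⟩ := hy
    exact ⟨x, Subtype.ext hx⟩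
  -- preservation of brackets
  have hΨlie : ∀ x y : ⨁ c : (TypeCPoset.RG P).ConnectedComponent, ↥(gc c),
      Ψ ⁅x, y⁆ = ⁅Ψ x, Ψ y⁆ := by
    intro x
    refine DirectSum.induction_on x ?_ ?_ ?_
    · intro y; rw [zero_lie, map_zero, zero_lie]
    · intro c m y
      refine DirectSum.induction_on y ?_ ?_ ?_
      · rw [lie_zero, map_zero, lie_zero]
      · intro c' m'
        by_cases hcc : c = c'
        · subst hcc
          rw [DirectSum.lie_of_same, hof, hof, hof]
          rfl
        · rw [DirectSum.lie_of_of_ne _ hcc, map_zero, hof, hof]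
          exact (Supp_lie_eq_zero P hcc (hsupp c m.2) (hsupp c' m'.2)).symm
      · intro y1 y2 h1 h2
        rw [lie_add, map_add, h1, h2, map_add, lie_add]
    · intro x1 x2 h1 h2 y
      rw [add_lie, map_add, h1 y, h2 y, map_add, add_lie]
  -- assemble the Lie algebra isomorphism
  refine ⟨(LieEquiv.ofBijective ⟨Φ, ?_⟩ ⟨hΦinj, hΦsurj⟩).symm⟩
  intro x y
  apply Subtype.ext
  exact hΨlie x y

end LiePoset
end

section
/- Let P be a connected type-C poset of height one. If the relation graph RG(P) contains two odd cycles that share more than one vertex, then g_C(P) is not contact. (In fact, under these hypotheses RG(P) contains an even cycle.) -/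
open scoped DirectSum

namespace LiePoset

attribute [local instance] LieRing.ofAssociativeRing

section AuxLie

open TypeCPoset

variable {n : ℕ} {P : TypeCPoset n}

lemma Pos.val_pos (a : Pos n) : 0 < a.val := by
  have h := a.property; rw [Finset.mem_Icc] at h; omega

lemma lt_flip {i j : ℤ} (hne : i ≠ -j) (h : P.lt i j) : P.lt (-j) (-i) :=
  ⟨(P.nsymm hne).mp h.1, fun e => h.2 (by omega)⟩

@[simp] lemma toIdx_val (a : Pos n) : (Pos.toIdx a).val = a.val := rfl
@[simp] lemma negIdx_val (a : Idx n) : (Idx.neg a).val = -a.val := rfl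

@[simp] lemma toIdx_eq_toIdx {a b : Pos n} : Pos.toIdx a = Pos.toIdx b ↔ a = b := by
  rw [Subtype.ext_iff, Subtype.ext_iff]; exact Iff.rfl

@[simp] lemma negIdx_eq_negIdx {a b : Pos n} :
    (Pos.toIdx a).neg = (Pos.toIdx b).neg ↔ a = b := by
  rw [Subtype.ext_iff, Subtype.ext_iff]
  show -a.val = -b.val ↔ a.val = b.val
  omega

@[simp] lemma negIdx_ne_toIdx {a b : Pos n} : (Pos.toIdx a).neg ≠ Pos.toIdx b := by
  intro h
  rw [Subtype.ext_iff] at h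
  have ha := Pos.val_pos a; have hb := Pos.val_pos b
  have : -a.val = b.val := h
  omega

@[simp] lemma toIdx_ne_negIdx {a b : Pos n} : Pos.toIdx a ≠ (Pos.toIdx b).neg := by
  intro h
  rw [Subtype.ext_iff] at h
  have ha := Pos.val_pos a; have hb := Pos.val_pos b
  have : a.val = -b.val := h
  omega

/-- `v` is a "lower" vertex: `v ≺ m` for some `m`. -/
def LowerV (P : TypeCPoset n) (v : Pos n) : Prop := ∃ m : ℤ, P.lt v.val m

open Classical in
/-- The sign `τ_v`. -/
noncomputable def tauP (P : TypeCPoset n) (v : Pos n) : ℂ :=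
  if LowerV P v then -1 else 1

lemma tauP_of_lower {v : Pos n} (h : LowerV P v) : tauP P v = -1 := by
  rw [tauP, if_pos h]

lemma tauP_of_not_lower {v : Pos n} (h : ¬ LowerV P v) : tauP P v = 1 := by
  rw [tauP, if_neg h]

/-- The positive vertex obtained from a matrix index by taking absolute value. -/
def absPos (r : Idx n) : Pos n :=
  ⟨|r.val|, by
    have h := r.property
    simp only [Finset.mem_erase, Finset.mem_Icc] at h
    rw [Finset.mem_Icc]
    rcases abs_cases r.val with ⟨h1, h2⟩ | ⟨h1, h2⟩ <;> omega⟩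

@[simp] lemma absPos_toIdx (a : Pos n) : absPos (Pos.toIdx a) = a := by
  apply Subtype.ext
  show |a.val| = a.val
  exact abs_of_pos (Pos.val_pos a)

@[simp] lemma absPos_negIdx (a : Pos n) : absPos (Pos.toIdx a).neg = a := by
  apply Subtype.ext
  show |-a.val| = a.val
  rw [abs_neg]; exact abs_of_pos (Pos.val_pos a)

open Classical in
/-- A generator of `g_C(P)` attached to an edge `{a, b}` of `RG(P)`. -/
noncomputable def genOf (P : TypeCPoset n) (a b : Pos n) : Mat n :=
  if P.lt (-a.val) b.val ∨ P.lt (-b.val) a.val then Rpm a b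
  else if P.lt (-a.val) (-b.val) then Rdash b a
  else Rdash a b

lemma std_ne_zero {p q r c : Idx n} (h : Matrix.single p q (1 : ℂ) r c ≠ 0) :
    p = r ∧ q = c := by
  by_contra hc
  exact h (Matrix.single_apply_of_ne _ _ _ _ _ hc)

section AdjFacts

variable {a b : Pos n} (hadj : (RG P).Adj a b)

include hadj

lemma adj_ne : a ≠ b := hadj.1

lemma adj_vne : a.val ≠ b.val := fun h => hadj.1 (Subtype.ext h)

/-- Case analysis for `genOf` along an adjacency. -/
lemma genOf_cases :
    (P.lt (-a.val) b.val ∧ P.lt (-b.val) a.val ∧ genOf P a b = Rpm a b) ∨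
    (P.lt (-a.val) (-b.val) ∧ P.lt b.val a.val ∧ genOf P a b = Rdash b a) ∨
    (P.lt (-b.val) (-a.val) ∧ P.lt a.val b.val ∧ genOf P a b = Rdash a b) := by
  have hne := adj_vne hadj
  have ha := Pos.val_pos a
  have hb := Pos.val_pos b
  rw [genOf]
  split_ifs with h1 h2
  · left
    have hboth : P.lt (-a.val) b.val ∧ P.lt (-b.val) a.val := by
      rcases h1 with h | h
      · refine ⟨h, ?_⟩
        have := lt_flip (by omega) h
        simpa using this
      · refine ⟨?_, h⟩
        have := lt_flip (by omega) h
        simpa using this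
    exact ⟨hboth.1, hboth.2, rfl⟩
  · right; left
    refine ⟨h2, ?_, rfl⟩
    have := lt_flip (by omega) h2
    simpa using this
  · right; right
    have h3 : P.lt (-b.val) (-a.val) := by
      rcases hadj.2 with h | h | h | h
      · exact absurd (Or.inl h) h1
      · exact absurd (Or.inr h) h1
      · exact absurd h h2
      · exact h
    refine ⟨h3, ?_, rfl⟩
    have := lt_flip (by omega) h3
    simpa using this

lemma genOf_mem : genOf P a b ∈ gcSet P := by
  rcases genOf_cases hadj with ⟨h1, h2, he⟩ | ⟨h1, _, he⟩ | ⟨h1, _, he⟩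
  · rw [he]; exact Or.inr (Or.inr (Or.inl ⟨a, b, h1, h2, rfl⟩))
  · rw [he]; exact Or.inr (Or.inl ⟨b, a, h1, rfl⟩)
  · rw [he]; exact Or.inr (Or.inl ⟨a, b, h1, rfl⟩)

lemma genOf_entry {r c : Idx n} (h : genOf P a b r c ≠ 0) :
    P.lt r.val c.val ∧ s(absPos r, absPos c) = s(a, b) := by
  rcases genOf_cases hadj with ⟨h1, h2, he⟩ | ⟨h1, h2, he⟩ | ⟨h1, h2, he⟩ <;> rw [he] at h
  · rw [Rpm, Matrix.add_apply] at h
    have h' : Matrix.single (Pos.toIdx a).neg (Pos.toIdx b) (1:ℂ) r c ≠ 0 ∨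
        Matrix.single (Pos.toIdx b).neg (Pos.toIdx a) (1:ℂ) r c ≠ 0 := by
      by_contra hc
      push_neg at hc
      rw [hc.1, hc.2] at h
      exact h (add_zero 0)
    rcases h' with h' | h' <;> obtain ⟨rfl, rfl⟩ := std_ne_zero h'
    · refine ⟨by simpa using h1, by simp⟩
    · refine ⟨by simpa using h2, by simp [Sym2.eq_swap]⟩
  · rw [Rdash, Matrix.sub_apply] at h
    have h' : Matrix.single (Pos.toIdx a).neg (Pos.toIdx b).neg (1:ℂ) r c ≠ 0 ∨
        Matrix.single (Pos.toIdx b) (Pos.toIdx a) (1:ℂ) r c ≠ 0 := by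
      by_contra hc
      push_neg at hc
      rw [hc.1, hc.2] at h
      exact h (sub_zero 0)
    rcases h' with h' | h' <;> obtain ⟨rfl, rfl⟩ := std_ne_zero h'
    · refine ⟨by simpa using h1, by simp⟩
    · refine ⟨by simpa using h2, by simp [Sym2.eq_swap]⟩
  · rw [Rdash, Matrix.sub_apply] at h
    have h' : Matrix.single (Pos.toIdx b).neg (Pos.toIdx a).neg (1:ℂ) r c ≠ 0 ∨
        Matrix.single (Pos.toIdx a) (Pos.toIdx b) (1:ℂ) r c ≠ 0 := by
      by_contra hc
      push_neg at hc
      rw [hc.1, hc.2] at h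
      exact h (sub_zero 0)
    rcases h' with h' | h' <;> obtain ⟨rfl, rfl⟩ := std_ne_zero h'
    · refine ⟨by simpa using h1, by simp [Sym2.eq_swap]⟩
    · refine ⟨by simpa using h2, by simp⟩

lemma genOf_designated :
    ∃ r c : Idx n, genOf P a b r c = 1 ∧ s(absPos r, absPos c) = s(a, b) := by
  have hne : a ≠ b := adj_ne hadj
  rcases genOf_cases hadj with ⟨_, _, he⟩ | ⟨_, _, he⟩ | ⟨_, _, he⟩ <;> rw [he]
  · refine ⟨(Pos.toIdx a).neg, Pos.toIdx b, ?_, by simp⟩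
    rw [Rpm, Matrix.add_apply, Matrix.single_apply_same,
      Matrix.single_apply_of_ne _ _ _ _ _
        (fun hx => hne (by simpa using hx.1.symm)), add_zero]
  · refine ⟨(Pos.toIdx a).neg, (Pos.toIdx b).neg, ?_, by simp⟩
    rw [Rdash, Matrix.sub_apply, Matrix.single_apply_same,
      Matrix.single_apply_of_ne _ _ _ _ _
        (fun hx => toIdx_ne_negIdx hx.1), sub_zero]
  · refine ⟨(Pos.toIdx b).neg, (Pos.toIdx a).neg, ?_, by simp [Sym2.eq_swap]⟩
    rw [Rdash, Matrix.sub_apply, Matrix.single_apply_same,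
      Matrix.single_apply_of_ne _ _ _ _ _
        (fun hx => toIdx_ne_negIdx hx.1), sub_zero]

end AdjFacts

lemma std_mul_diag (i p q : Idx n) :
    Matrix.single i i (1:ℂ) * Matrix.single p q 1
      = (if i = p then (1:ℂ) else 0) • Matrix.single p q 1 := by
  by_cases h : i = p
  · subst h
    rw [Matrix.single_mul_single_same, if_pos rfl, one_smul, one_mul]
  · rw [Matrix.single_mul_single_of_ne (h := h), if_neg h, zero_smul]

lemma diag_mul_std (p q i : Idx n) :
    Matrix.single p q (1:ℂ) * Matrix.single i i 1
      = (if q = i then (1:ℂ) else 0) • Matrix.single p q 1 := by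
  by_cases h : q = i
  · subst h
    rw [Matrix.single_mul_single_same, one_mul, if_pos rfl, one_smul]
  · rw [Matrix.single_mul_single_of_ne (h := h), if_neg h, zero_smul]

lemma lie_D_std (m : Pos n) (p q : Idx n) :
    ⁅Dmat m, Matrix.single p q (1:ℂ)⁆ =
      ((if (Pos.toIdx m).neg = p then (1:ℂ) else 0) - (if Pos.toIdx m = p then 1 else 0)
        - (if q = (Pos.toIdx m).neg then 1 else 0) + (if q = Pos.toIdx m then 1 else 0))
        • Matrix.single p q (1:ℂ) := by
  rw [Ring.lie_def, Dmat, sub_mul, mul_sub, std_mul_diag, std_mul_diag, diag_mul_std,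
    diag_mul_std]
  module

lemma genOf_wt {a b : Pos n} (hP : P.HeightOne) (hadj : (RG P).Adj a b) (m : Pos n) :
    ⁅Dmat m, genOf P a b⁆ =
      ((if m = a then tauP P a else 0) + (if m = b then tauP P b else 0)) • genOf P a b := by
  rcases genOf_cases hadj with ⟨h1, h2, he⟩ | ⟨h1, h2, he⟩ | ⟨h1, h2, he⟩
  · have hta : tauP P a = 1 := tauP_of_not_lower (fun ⟨m', hm'⟩ => hP _ _ _ h2 hm')
    have htb : tauP P b = 1 := tauP_of_not_lower (fun ⟨m', hm'⟩ => hP _ _ _ h1 hm')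
    have c1 : ((if (Pos.toIdx m).neg = (Pos.toIdx a).neg then (1:ℂ) else 0)
        - (if Pos.toIdx m = (Pos.toIdx a).neg then 1 else 0)
        - (if Pos.toIdx b = (Pos.toIdx m).neg then 1 else 0)
        + (if Pos.toIdx b = Pos.toIdx m then 1 else 0))
        = ((if m = a then tauP P a else 0) + (if m = b then tauP P b else 0)) := by
      rw [hta, htb, if_neg toIdx_ne_negIdx, if_neg toIdx_ne_negIdx, sub_zero, sub_zero]
      by_cases hma : m = a <;> by_cases hmb : m = b <;>
        simp [hma, hmb, show (a = m) ↔ (m = a) from eq_comm, show (b = m) ↔ (m = b) from eq_comm,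
          show (a = b) ↔ (b = a) from eq_comm, add_comm] <;> split_ifs <;> ring
    have c2 : ((if (Pos.toIdx m).neg = (Pos.toIdx b).neg then (1:ℂ) else 0)
        - (if Pos.toIdx m = (Pos.toIdx b).neg then 1 else 0)
        - (if Pos.toIdx a = (Pos.toIdx m).neg then 1 else 0)
        + (if Pos.toIdx a = Pos.toIdx m then 1 else 0))
        = ((if m = a then tauP P a else 0) + (if m = b then tauP P b else 0)) := by
      rw [hta, htb, if_neg toIdx_ne_negIdx, if_neg toIdx_ne_negIdx, sub_zero, sub_zero]
      by_cases hma : m = a <;> by_cases hmb : m = b <;>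
        simp [hma, hmb, show (a = m) ↔ (m = a) from eq_comm, show (b = m) ↔ (m = b) from eq_comm,
          show (a = b) ↔ (b = a) from eq_comm, add_comm] <;> split_ifs <;> ring
    rw [he, Rpm, lie_add, lie_D_std, lie_D_std, smul_add, c1, c2]
  · have hlb : LowerV P b := ⟨a.val, by simpa using lt_flip (by
        have := Pos.val_pos a; have := Pos.val_pos b; omega) h1⟩
    have hta : tauP P a = 1 := tauP_of_not_lower (fun ⟨m', hm'⟩ => hP _ _ _ h2 hm')
    have htb : tauP P b = -1 := tauP_of_lower hlb
    have c1 : ((if (Pos.toIdx m).neg = (Pos.toIdx a).neg then (1:ℂ) else 0)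
        - (if Pos.toIdx m = (Pos.toIdx a).neg then 1 else 0)
        - (if (Pos.toIdx b).neg = (Pos.toIdx m).neg then 1 else 0)
        + (if (Pos.toIdx b).neg = Pos.toIdx m then 1 else 0))
        = ((if m = a then tauP P a else 0) + (if m = b then tauP P b else 0)) := by
      rw [hta, htb, if_neg toIdx_ne_negIdx, if_neg negIdx_ne_toIdx, add_zero, sub_zero]
      by_cases hma : m = a <;> by_cases hmb : m = b <;>
        simp [hma, hmb, show (a = m) ↔ (m = a) from eq_comm, show (b = m) ↔ (m = b) from eq_comm,
          show (a = b) ↔ (b = a) from eq_comm, add_comm] <;> split_ifs <;> ring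
    have c2 : ((if (Pos.toIdx m).neg = Pos.toIdx b then (1:ℂ) else 0)
        - (if Pos.toIdx m = Pos.toIdx b then 1 else 0)
        - (if Pos.toIdx a = (Pos.toIdx m).neg then 1 else 0)
        + (if Pos.toIdx a = Pos.toIdx m then 1 else 0))
        = ((if m = a then tauP P a else 0) + (if m = b then tauP P b else 0)) := by
      rw [hta, htb, if_neg negIdx_ne_toIdx, if_neg toIdx_ne_negIdx, sub_zero, zero_sub]
      by_cases hma : m = a <;> by_cases hmb : m = b <;>
        simp [hma, hmb, show (a = m) ↔ (m = a) from eq_comm, show (b = m) ↔ (m = b) from eq_comm,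
          show (a = b) ↔ (b = a) from eq_comm, add_comm] <;> split_ifs <;> ring
    rw [he, Rdash, lie_sub, lie_D_std, lie_D_std, smul_sub, c1, c2]
  · have hla : LowerV P a := ⟨b.val, by simpa using lt_flip (by
        have := Pos.val_pos a; have := Pos.val_pos b; omega) h1⟩
    have hta : tauP P a = -1 := tauP_of_lower hla
    have htb : tauP P b = 1 := tauP_of_not_lower (fun ⟨m', hm'⟩ => hP _ _ _ h2 hm')
    have c1 : ((if (Pos.toIdx m).neg = (Pos.toIdx b).neg then (1:ℂ) else 0)
        - (if Pos.toIdx m = (Pos.toIdx b).neg then 1 else 0)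
        - (if (Pos.toIdx a).neg = (Pos.toIdx m).neg then 1 else 0)
        + (if (Pos.toIdx a).neg = Pos.toIdx m then 1 else 0))
        = ((if m = a then tauP P a else 0) + (if m = b then tauP P b else 0)) := by
      rw [hta, htb, if_neg toIdx_ne_negIdx, if_neg negIdx_ne_toIdx, add_zero, sub_zero]
      by_cases hma : m = a <;> by_cases hmb : m = b <;>
        simp [hma, hmb, show (a = m) ↔ (m = a) from eq_comm, show (b = m) ↔ (m = b) from eq_comm,
          show (a = b) ↔ (b = a) from eq_comm, add_comm] <;> split_ifs <;> ring
    have c2 : ((if (Pos.toIdx m).neg = Pos.toIdx a then (1:ℂ) else 0)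
        - (if Pos.toIdx m = Pos.toIdx a then 1 else 0)
        - (if Pos.toIdx b = (Pos.toIdx m).neg then 1 else 0)
        + (if Pos.toIdx b = Pos.toIdx m then 1 else 0))
        = ((if m = a then tauP P a else 0) + (if m = b then tauP P b else 0)) := by
      rw [hta, htb, if_neg negIdx_ne_toIdx, if_neg toIdx_ne_negIdx, sub_zero, zero_sub]
      by_cases hma : m = a <;> by_cases hmb : m = b <;>
        simp [hma, hmb, show (a = m) ↔ (m = a) from eq_comm, show (b = m) ↔ (m = b) from eq_comm,
          show (a = b) ↔ (b = a) from eq_comm, add_comm] <;> split_ifs <;> ring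
    rw [he, Rdash, lie_sub, lie_D_std, lie_D_std, smul_sub, c1, c2]

lemma Rdash_entry {i j : Pos n} (hlt : P.lt (-j.val) (-i.val)) {r c : Idx n}
    (h : Rdash i j r c ≠ 0) : P.lt r.val c.val := by
  rw [Rdash, Matrix.sub_apply] at h
  have h' : Matrix.single (Pos.toIdx j).neg (Pos.toIdx i).neg (1:ℂ) r c ≠ 0 ∨
      Matrix.single (Pos.toIdx i) (Pos.toIdx j) (1:ℂ) r c ≠ 0 := by
    by_contra hc
    push_neg at hc
    rw [hc.1, hc.2] at h
    exact h (sub_zero 0)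
  rcases h' with h' | h' <;> obtain ⟨rfl, rfl⟩ := std_ne_zero h'
  · simpa using hlt
  · have := lt_flip (by have := Pos.val_pos i; have := Pos.val_pos j; omega) hlt
    simpa using this

lemma Rpm_entry {i j : Pos n} (hlt1 : P.lt (-i.val) j.val) (hlt2 : P.lt (-j.val) i.val)
    {r c : Idx n} (h : Rpm i j r c ≠ 0) : P.lt r.val c.val := by
  rw [Rpm, Matrix.add_apply] at h
  have h' : Matrix.single (Pos.toIdx i).neg (Pos.toIdx j) (1:ℂ) r c ≠ 0 ∨
      Matrix.single (Pos.toIdx j).neg (Pos.toIdx i) (1:ℂ) r c ≠ 0 := by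
    by_contra hc
    push_neg at hc
    rw [hc.1, hc.2] at h
    exact h (add_zero 0)
  rcases h' with h' | h' <;> obtain ⟨rfl, rfl⟩ := std_ne_zero h'
  · simpa using hlt1
  · simpa using hlt2

lemma Eloop_entry {i : Pos n} (hlt : P.lt (-i.val) i.val) {r c : Idx n}
    (h : Eloop i r c ≠ 0) : P.lt r.val c.val := by
  rw [Eloop] at h
  obtain ⟨rfl, rfl⟩ := std_ne_zero h
  simpa using hlt

lemma prod_zero (hP : P.HeightOne) {A B : Mat n}
    (hA : ∀ r c : Idx n, A r c ≠ 0 → P.lt r.val c.val)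
    (hB : ∀ r c : Idx n, B r c ≠ 0 → P.lt r.val c.val) : A * B = 0 := by
  ext r c
  rw [Matrix.mul_apply, Matrix.zero_apply]
  apply Finset.sum_eq_zero
  intro k _
  by_contra hne
  have h1 : A r k ≠ 0 := fun h0 => hne (by rw [h0, zero_mul])
  have h2 : B k c ≠ 0 := fun h0 => hne (by rw [h0, mul_zero])
  exact hP _ _ _ (hA _ _ h1) (hB _ _ h2)

/-- The alternating combination of generators along a walk. -/
noncomputable def Xw (P : TypeCPoset n) (Φ : Mat n →ₗ[ℂ] ℂ) :
    {a b : Pos n} → (RG P).Walk a b → Mat n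
  | _, _, SimpleGraph.Walk.nil => 0
  | a, _, SimpleGraph.Walk.cons (v := c) _ q =>
      (Φ (genOf P a c))⁻¹ • genOf P a c - Xw P Φ q

variable {Φ : Mat n →ₗ[ℂ] ℂ}

@[simp] lemma Xw_nil {a : Pos n} : Xw P Φ (SimpleGraph.Walk.nil : (RG P).Walk a a) = 0 := rfl

@[simp] lemma Xw_cons {a c b : Pos n} (h : (RG P).Adj a c) (q : (RG P).Walk c b) :
    Xw P Φ (SimpleGraph.Walk.cons h q)
      = (Φ (genOf P a c))⁻¹ • genOf P a c - Xw P Φ q := rfl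

lemma Xw_entry {a b : Pos n} (q : (RG P).Walk a b) {r c : Idx n}
    (h : Xw P Φ q r c ≠ 0) :
    P.lt r.val c.val ∧ ∃ d ∈ q.darts, s(absPos r, absPos c) = s(d.fst, d.snd) := by
  induction q with
  | nil => simp at h
  | @cons u v w hadj q ih =>
    rw [Xw_cons, Matrix.sub_apply, Matrix.smul_apply] at h
    by_cases h1 : genOf P u v r c = 0
    · rw [h1, smul_zero, zero_sub, neg_ne_zero] at h
      obtain ⟨hlt, d, hd, he⟩ := ih h
      exact ⟨hlt, d, by simp [SimpleGraph.Walk.darts_cons, hd], he⟩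
    · obtain ⟨hlt, he⟩ := genOf_entry hadj h1
      exact ⟨hlt, ⟨(u, v), hadj⟩, by simp [SimpleGraph.Walk.darts_cons], he⟩

lemma Xw_mem {a b : Pos n} (q : (RG P).Walk a b) :
    Xw P Φ q ∈ Submodule.span ℂ (gcSet P) := by
  induction q with
  | nil => rw [Xw_nil]; exact Submodule.zero_mem _
  | cons hadj q ih =>
    rw [Xw_cons]
    exact Submodule.sub_mem _
      (Submodule.smul_mem _ _ (Submodule.subset_span (genOf_mem hadj))) ih

lemma Xw_phi {a b : Pos n} (q : (RG P).Walk a b)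
    (hnz : ∀ d ∈ q.darts, Φ (genOf P d.fst d.snd) ≠ 0) :
    Φ (Xw P Φ q) = if Even q.length then 0 else 1 := by
  induction q with
  | nil => simp
  | @cons u v w hadj q ih =>
    have hh : Φ (genOf P u v) ≠ 0 := hnz ⟨(u, v), hadj⟩ (by simp [SimpleGraph.Walk.darts_cons])
    rw [Xw_cons, map_sub, map_smul, smul_eq_mul, inv_mul_cancel₀ hh,
      ih (fun d hd => hnz d (by simp [SimpleGraph.Walk.darts_cons, hd]))]
    by_cases hpar : Even q.length <;>
      simp [SimpleGraph.Walk.length_cons, Nat.even_add_one, hpar]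

lemma Xw_lieD (hP : P.HeightOne) {a b : Pos n} (q : (RG P).Walk a b)
    (hnz : ∀ d ∈ q.darts, Φ (genOf P d.fst d.snd) ≠ 0) (m : Pos n) :
    Φ ⁅Dmat m, Xw P Φ q⁆ =
      (if m = a then tauP P a else 0)
        - (-1 : ℂ) ^ q.length * (if m = b then tauP P b else 0) := by
  induction q with
  | nil => simp
  | @cons u v w hadj q ih =>
    have hh : Φ (genOf P u v) ≠ 0 := hnz ⟨(u, v), hadj⟩ (by simp [SimpleGraph.Walk.darts_cons])
    rw [Xw_cons, lie_sub, lie_smul, genOf_wt hP hadj m, map_sub, map_smul, map_smul,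
      ih (fun d hd => hnz d (by simp [SimpleGraph.Walk.darts_cons, hd])), smul_eq_mul,
      smul_eq_mul]
    have hc : (Φ (genOf P u v))⁻¹ * (((if m = u then tauP P u else 0)
        + (if m = v then tauP P v else 0)) * Φ (genOf P u v))
        = ((if m = u then tauP P u else 0) + (if m = v then tauP P v else 0)) := by
      field_simp
    rw [hc, SimpleGraph.Walk.length_cons, pow_succ]
    ring

lemma Xw_lt {a b : Pos n} (q : (RG P).Walk a b) {r c : Idx n}
    (h : Xw P Φ q r c ≠ 0) : P.lt r.val c.val := (Xw_entry q h).1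

lemma contact_contra (hP : P.HeightOne) {g : LieSubalgebra ℂ (Mat n)}
    (hg : g.toSubmodule = Submodule.span ℂ (TypeCPoset.gcSet P))
    (φ : Module.Dual ℂ ↥g)
    (hnd : ∀ x : ↥g, φ x = 0 → (∀ y : ↥g, φ y = 0 → φ ⁅x, y⁆ = 0) → x = 0)
    (Φ : Mat n →ₗ[ℂ] ℂ) (hΦ : ∀ x : ↥g, Φ x.val = φ x)
    (x : Mat n) (hmem : x ∈ Submodule.span ℂ (gcSet P)) (hne : x ≠ 0)
    (hval : Φ x = 0)
    (hlt : ∀ r c : Idx n, x r c ≠ 0 → P.lt r.val c.val)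
    (hlieD : ∀ m : Pos n, Φ ⁅Dmat m, x⁆ = 0) : False := by
  have hmem' : x ∈ g := by
    rw [← LieSubalgebra.mem_toSubmodule]
    show x ∈ g.toSubmodule
    rw [hg]
    exact hmem
  have hbr : ∀ Y ∈ Submodule.span ℂ (gcSet P), Φ ⁅x, Y⁆ = 0 := by
    intro Y hY
    induction hY using Submodule.span_induction with
    | mem Y hYmem =>
      rcases hYmem with ⟨i, rfl⟩ | ⟨i, j, hlt1, rfl⟩ | ⟨i, j, hlt1, hlt2, rfl⟩ | ⟨i, hlt1, rfl⟩
      · rw [← lie_skew, map_neg, hlieD, neg_zero]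
      · rw [Ring.lie_def, prod_zero hP hlt (fun r c h => Rdash_entry hlt1 h),
          prod_zero hP (fun r c h => Rdash_entry hlt1 h) hlt, sub_zero, map_zero]
      · rw [Ring.lie_def, prod_zero hP hlt (fun r c h => Rpm_entry hlt1 hlt2 h),
          prod_zero hP (fun r c h => Rpm_entry hlt1 hlt2 h) hlt, sub_zero, map_zero]
      · rw [Ring.lie_def, prod_zero hP hlt (fun r c h => Eloop_entry hlt1 h),
          prod_zero hP (fun r c h => Eloop_entry hlt1 h) hlt, sub_zero, map_zero]
    | zero => rw [lie_zero, map_zero]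
    | add y z _ _ hy hz => rw [lie_add, map_add, hy, hz, add_zero]
    | smul c y _ hy => rw [lie_smul, map_smul, hy, smul_zero]
  have hx0 := hnd ⟨x, hmem'⟩ (by rw [← hΦ]; exact hval)
    (fun y _ => by
      have hb : (⁅(⟨x, hmem'⟩ : ↥g), y⁆ : ↥g).val = ⁅x, y.val⁆ := rfl
      rw [← hΦ, hb]
      refine hbr y.val ?_
      have : y.val ∈ g.toSubmodule := (LieSubalgebra.mem_toSubmodule (L' := g)).mpr y.2
      rw [hg] at this
      exact this)
  exact hne (by simpa using congrArg Subtype.val hx0)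

lemma not_contact_of_even_cycle (hP : P.HeightOne) {z : Pos n} (r : (RG P).Walk z z)
    (hr : r.IsCycle) (heven : Even r.length) {g : LieSubalgebra ℂ (Mat n)}
    (hg : g.toSubmodule = Submodule.span ℂ (TypeCPoset.gcSet P)) :
    ¬ IsContact ↥g := by
  rintro ⟨φ, -, hnd⟩
  let φ' : g.toSubmodule →ₗ[ℂ] ℂ :=
    { toFun := fun y => φ ⟨y.val, (LieSubalgebra.mem_toSubmodule (L' := g)).mp y.2⟩
      map_add' := fun y z => by rw [← map_add]; exact congrArg φ (Subtype.ext rfl)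
      map_smul' := fun c y => by
        rw [RingHom.id_apply, ← map_smul]; exact congrArg φ (Subtype.ext rfl) }
  obtain ⟨Φ, hΦeq⟩ := LinearMap.exists_extend φ'
  have hΦ : ∀ x : ↥g, Φ x.val = φ x := by
    intro x
    have hx2 : x.val ∈ g.toSubmodule := (LieSubalgebra.mem_toSubmodule (L' := g)).mpr x.2
    have h1 := DFunLike.congr_fun hΦeq (⟨x.val, hx2⟩ : g.toSubmodule)
    simp only [LinearMap.coe_comp, Function.comp_apply, Submodule.coe_subtype] at h1
    exact h1.trans (congrArg φ (Subtype.ext rfl))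
  by_cases hnz : ∀ d ∈ r.darts, Φ (genOf P d.fst d.snd) ≠ 0
  · obtain ⟨u, hadj, q, hq⟩ := SimpleGraph.Walk.not_nil_iff.mp hr.not_nil
    obtain ⟨r0, c0, hv1, hv2⟩ := genOf_designated hadj
    have hhead : Φ (genOf P z u) ≠ 0 := by
      apply hnz ⟨(z, u), hadj⟩
      rw [hq, SimpleGraph.Walk.darts_cons]
      exact List.mem_cons_self
    have hXq0 : Xw P Φ q r0 c0 = 0 := by
      by_contra h0
      obtain ⟨-, d, hd, hde⟩ := Xw_entry q h0
      have hnodup : (SimpleGraph.Walk.cons hadj q).edges.Nodup := by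
        have := hr.isCircuit.isTrail.edges_nodup
        rwa [hq] at this
      rw [SimpleGraph.Walk.edges_cons, List.nodup_cons] at hnodup
      apply hnodup.1
      have : d.edge = s(z, u) := by
        show s(d.fst, d.snd) = _
        rw [← hde, hv2]
      rw [← this]
      exact List.mem_map_of_mem hd
    have hXne : Xw P Φ r ≠ 0 := by
      intro h0
      have : Xw P Φ r r0 c0 = (Φ (genOf P z u))⁻¹ := by
        rw [hq, Xw_cons, Matrix.sub_apply, Matrix.smul_apply, hv1, hXq0, sub_zero,
          smul_eq_mul, mul_one]
      rw [h0] at this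
      exact inv_ne_zero hhead (by simpa using this.symm)
    refine contact_contra hP hg φ hnd Φ hΦ (Xw P Φ r) (Xw_mem r) hXne ?_ (fun r' c' h => Xw_lt r h) ?_
    · rw [Xw_phi r hnz, if_pos heven]
    · intro m
      rw [Xw_lieD hP r hnz m, Even.neg_one_pow heven, one_mul, sub_self]
  · push_neg at hnz
    obtain ⟨d, hd, hd0⟩ := hnz
    obtain ⟨r0, c0, hv1, hv2⟩ := genOf_designated d.adj
    refine contact_contra hP hg φ hnd Φ hΦ (genOf P d.fst d.snd)
      (Submodule.subset_span (genOf_mem d.adj)) ?_ hd0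
      (fun r' c' h => (genOf_entry d.adj h).1) ?_
    · intro h0
      rw [h0] at hv1
      exact one_ne_zero hv1.symm
    · intro m
      rw [genOf_wt hP d.adj m, map_smul, smul_eq_mul, hd0, mul_zero]

section AuxGraph

variable {V : Type*} [DecidableEq V] {G : SimpleGraph V}

lemma isPath_loop_eq_nil {x : V} {A : G.Walk x x} (hA : A.IsPath) :
    A = SimpleGraph.Walk.nil := by
  cases A with
  | nil => rfl
  | cons h q =>
    rw [SimpleGraph.Walk.cons_isPath_iff] at hA
    exact absurd q.end_mem_support hA.2

lemma ne_of_isPath_pos {x y : V} {A : G.Walk x y} (hA : A.IsPath) (h : 0 < A.length) :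
    x ≠ y := by
  rintro rfl
  rw [isPath_loop_eq_nil hA] at h
  simp at h

lemma length_pos_of_ne {x y : V} {A : G.Walk x y} (h : x ≠ y) : 0 < A.length := by
  by_contra h0
  push_neg at h0
  have : A.Nil := SimpleGraph.Walk.nil_iff_length_eq.mpr (by omega)
  exact h this.eq

lemma mem_tail_of_closed {c u : V} {r : G.Walk c c} (hnil : ¬ r.Nil) (h : u ∈ r.support) :
    u ∈ r.support.tail := by
  obtain ⟨v, hadj, q, rfl⟩ := SimpleGraph.Walk.not_nil_iff.mp hnil
  rw [SimpleGraph.Walk.support_cons, List.tail_cons]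
  rw [SimpleGraph.Walk.support_cons] at h
  rcases List.mem_cons.mp h with rfl | h
  · exact q.end_mem_support
  · exact h

lemma length_rotate {c u : V} (r : G.Walk c c) (hu : u ∈ r.support) :
    (r.rotate _ hu).length = r.length := by
  have := (SimpleGraph.Walk.rotate_edges r _ hu).perm.length_eq
  rwa [SimpleGraph.Walk.length_edges, SimpleGraph.Walk.length_edges] at this

lemma mem_support_rotate {c u x : V} {r : G.Walk c c} (hr : ¬ r.Nil) (hu : u ∈ r.support) :
    x ∈ (r.rotate _ hu).support ↔ x ∈ r.support := by
  have hnil2 : ¬ (r.rotate _ hu).Nil := by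
    intro hcon
    apply hr
    rw [SimpleGraph.Walk.nil_iff_length_eq] at hcon ⊢
    rwa [length_rotate] at hcon
  have hperm := (SimpleGraph.Walk.support_rotate r _ hu).perm
  constructor
  · intro h
    exact List.mem_of_mem_tail (hperm.mem_iff.mp (mem_tail_of_closed hnil2 h))
  · intro h
    exact List.mem_of_mem_tail (hperm.mem_iff.mpr (mem_tail_of_closed hr h))

lemma cycle_split {v w : V} {p : G.Walk v v} (hp : p.IsCycle) (hw : w ∈ p.support)
    (hwv : w ≠ v) :
    (p.takeUntil w hw).IsPath ∧ (p.dropUntil w hw).IsPath ∧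
      ∀ u, u ∈ (p.takeUntil w hw).support → u ∈ (p.dropUntil w hw).support →
        u = v ∨ u = w := by
  set B1 := p.takeUntil w hw with hB1
  set B2 := p.dropUntil w hw with hB2
  have hspec : B1.append B2 = p := p.take_spec hw
  have hsup : B1.support ++ B2.support.tail = p.support := by
    rw [← hspec, SimpleGraph.Walk.support_append]
  have hB1c : B1.support = v :: B1.support.tail := B1.support_eq_cons
  have hB2c : B2.support = w :: B2.support.tail := B2.support_eq_cons
  have hpc : p.support = v :: p.support.tail := p.support_eq_cons
  have htails : B1.support.tail ++ B2.support.tail = p.support.tail := by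
    have h' := hsup
    rw [hB1c, hpc, List.cons_append] at h'
    have := congrArg List.tail h'
    simpa using this
  have hnd : p.support.tail.Nodup := ((SimpleGraph.Walk.isCycle_def p).mp hp).2.2
  rw [← htails, List.nodup_append] at hnd
  obtain ⟨h1nd, h2nd, hdisj⟩ := hnd
  have hvmem : v ∈ B2.support.tail := by
    have hv2 : v ∈ B2.support := B2.end_mem_support
    rw [hB2c] at hv2
    rcases List.mem_cons.mp hv2 with h | h
    · exact absurd h.symm hwv
    · exact h
  have hwmem : w ∈ B1.support.tail := by
    have hw1 : w ∈ B1.support := B1.end_mem_support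
    rw [hB1c] at hw1
    rcases List.mem_cons.mp hw1 with h | h
    · exact absurd h hwv
    · exact h
  refine ⟨?_, ?_, ?_⟩
  · apply SimpleGraph.Walk.IsPath.mk'
    rw [hB1c, List.nodup_cons]
    exact ⟨fun hvm => hdisj _ hvm _ hvmem rfl, h1nd⟩
  · apply SimpleGraph.Walk.IsPath.mk'
    rw [hB2c, List.nodup_cons]
    exact ⟨fun hwm => hdisj _ hwmem _ hwm rfl, h2nd⟩
  · intro u hu1 hu2
    rw [hB1c] at hu1
    rw [hB2c] at hu2
    rcases List.mem_cons.mp hu1 with rfl | hu1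
    · exact Or.inl rfl
    rcases List.mem_cons.mp hu2 with rfl | hu2
    · exact Or.inr rfl
    · exact (hdisj _ hu1 _ hu2 rfl).elim

lemma cycle_of_paths {z z' : V} {D1 : G.Walk z z'} {D2 : G.Walk z' z}
    (h1 : D1.IsPath) (h2 : D2.IsPath) (hzz : z ≠ z')
    (hdisj : ∀ u, u ∈ D1.support → u ∈ D2.support → u = z ∨ u = z')
    (hedge : ∀ e ∈ D1.edges, e ∉ D2.edges) :
    (D1.append D2).IsCycle := by
  rw [SimpleGraph.Walk.isCycle_def]
  refine ⟨?_, ?_, ?_⟩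
  · rw [SimpleGraph.Walk.isTrail_def, SimpleGraph.Walk.edges_append, List.nodup_append]
    exact ⟨h1.isTrail.edges_nodup, h2.isTrail.edges_nodup,
      fun a ha b hb hab => hedge a ha (hab ▸ hb)⟩
  · intro h0
    have hlen := congrArg SimpleGraph.Walk.length h0
    rw [SimpleGraph.Walk.length_append, SimpleGraph.Walk.length_nil] at hlen
    have := length_pos_of_ne (A := D1) hzz
    omega
  · rw [SimpleGraph.Walk.tail_support_append, List.nodup_append]
    have h1c := D1.support_eq_cons
    have h2c := D2.support_eq_cons
    have h1nd := h1.support_nodup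
    have h2nd := h2.support_nodup
    rw [h1c, List.nodup_cons] at h1nd
    rw [h2c, List.nodup_cons] at h2nd
    refine ⟨h1nd.2, h2nd.2, ?_⟩
    rintro u hu1 _ hu2 rfl
    have hu1' : u ∈ D1.support := by rw [h1c]; exact List.mem_cons_of_mem _ hu1
    have hu2' : u ∈ D2.support := by rw [h2c]; exact List.mem_cons_of_mem _ hu2
    rcases hdisj u hu1' hu2' with rfl | rfl
    · exact h1nd.1 hu1
    · exact h2nd.1 hu2

lemma ends_edge_not_mem {x y : V} {A : G.Walk x y} (hA : A.IsPath) (h2 : 2 ≤ A.length) :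
    s(x, y) ∉ A.edges := by
  cases A with
  | nil => simp
  | @cons _ u _ hadj q =>
    rw [SimpleGraph.Walk.cons_isPath_iff] at hA
    intro hmem
    rw [SimpleGraph.Walk.edges_cons, List.mem_cons] at hmem
    rcases hmem with he | he
    · rw [Sym2.eq_iff] at he
      rcases he with ⟨-, rfl⟩ | ⟨rfl, rfl⟩
      · have hq := isPath_loop_eq_nil hA.1
        rw [SimpleGraph.Walk.length_cons, hq, SimpleGraph.Walk.length_nil] at h2
        omega
      · exact G.loopless.irrefl _ hadj
    · exact hA.2 (SimpleGraph.Walk.fst_mem_support_of_mem_edges q he)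

lemma mem_of_edge {x y u : V} {r : G.Walk x y} {e : Sym2 V} (he : e ∈ r.edges) (hu : u ∈ e) :
    u ∈ r.support := by
  induction e with
  | _ c d =>
    rcases Sym2.mem_iff.mp hu with rfl | rfl
    · exact r.fst_mem_support_of_mem_edges he
    · exact r.snd_mem_support_of_mem_edges he

lemma find_arc {v0 : V} (p : G.Walk v0 v0) :
    ∀ (N : ℕ) {x y : V} (A : G.Walk x y), A.length ≤ N → A.IsPath →
      x ∈ p.support → y ∈ p.support →
      (∀ e ∈ A.edges, e ∈ p.edges) ∨
      (∃ (z z' : V) (B : G.Walk z z'), B.IsPath ∧ z ≠ z' ∧ z ∈ p.support ∧ z' ∈ p.support ∧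
        (∀ u ∈ B.support, u = z ∨ u = z' ∨ u ∉ p.support) ∧ ∀ e ∈ B.edges, e ∉ p.edges) := by
  intro N
  induction N with
  | zero =>
    intro x y A hlen hA hx hy
    left
    have he : A.edges = [] := List.length_eq_zero_iff.mp
      (by rw [SimpleGraph.Walk.length_edges]; omega)
    rw [he]
    intro e hee
    simp at hee
  | succ N ih =>
    intro x y A hlen hA hx hy
    by_cases hint : ∃ u ∈ A.support, u ≠ x ∧ u ≠ y ∧ u ∈ p.support
    · obtain ⟨u, hu, hux, huy, huS⟩ := hint
      have hl : (A.takeUntil u hu).length + (A.dropUntil u hu).length = A.length := by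
        have := congrArg SimpleGraph.Walk.length (A.take_spec hu)
        rwa [SimpleGraph.Walk.length_append] at this
      have hl1 : 0 < (A.takeUntil u hu).length := length_pos_of_ne (Ne.symm hux)
      have hl2 : 0 < (A.dropUntil u hu).length := length_pos_of_ne huy
      rcases ih (A.takeUntil u hu) (by omega) (hA.takeUntil hu) hx huS with hL1 | hR
      · rcases ih (A.dropUntil u hu) (by omega) (hA.dropUntil hu) huS hy with hL2 | hR
        · left
          intro e he
          rw [← A.take_spec hu, SimpleGraph.Walk.edges_append, List.mem_append] at he
          rcases he with he | he
          · exact hL1 e he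
          · exact hL2 e he
        · exact Or.inr hR
      · exact Or.inr hR
    · push_neg at hint
      rcases Nat.lt_or_ge A.length 2 with hsmall | hbig
      · rcases Nat.lt_or_ge A.length 1 with h0 | h1
        · left
          have he : A.edges = [] := List.length_eq_zero_iff.mp
            (by rw [SimpleGraph.Walk.length_edges]; omega)
          rw [he]
          intro e hee
          simp at hee
        · have hxy : x ≠ y := ne_of_isPath_pos hA (by omega)
          by_cases hall : ∀ e ∈ A.edges, e ∈ p.edges
          · exact Or.inl hall
          · push_neg at hall
            obtain ⟨e0, he0, he0p⟩ := hall
            right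
            refine ⟨x, y, A, hA, hxy, hx, hy, ?_, ?_⟩
            · intro u hu
              by_cases hh1 : u = x
              · exact Or.inl hh1
              by_cases hh2 : u = y
              · exact Or.inr (Or.inl hh2)
              exact Or.inr (Or.inr (hint u hu hh1 hh2))
            · intro e he
              have hlen1 : A.edges.length = 1 := by
                rw [SimpleGraph.Walk.length_edges]; omega
              obtain ⟨e1, he1⟩ := List.length_eq_one_iff.mp hlen1
              rw [he1, List.mem_singleton] at he he0
              rw [he, ← he0]
              exact he0p
      · right
        have hxy : x ≠ y := ne_of_isPath_pos hA (by omega)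
        refine ⟨x, y, A, hA, hxy, hx, hy, ?_, ?_⟩
        · intro u hu
          by_cases hh1 : u = x
          · exact Or.inl hh1
          by_cases hh2 : u = y
          · exact Or.inr (Or.inl hh2)
          exact Or.inr (Or.inr (hint u hu hh1 hh2))
        · intro e he
          obtain ⟨d, hd, rfl⟩ := List.mem_map.mp
            (by rw [show A.edges = A.darts.map SimpleGraph.Dart.edge from rfl] at he; exact he)
          have hfs : d.edge = s(d.fst, d.snd) := rfl
          intro hpe
          by_cases hf : d.fst ∈ p.support
          · by_cases hsn : d.snd ∈ p.support
            · have hfm : d.fst = x ∨ d.fst = y := by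
                by_contra hc
                push_neg at hc
                exact hint d.fst (SimpleGraph.Walk.dart_fst_mem_support_of_mem_darts A hd)
                  hc.1 hc.2 hf
              have hsm : d.snd = x ∨ d.snd = y := by
                by_contra hc
                push_neg at hc
                exact hint d.snd (SimpleGraph.Walk.dart_snd_mem_support_of_mem_darts A hd)
                  hc.1 hc.2 hsn
              have hne := d.adj.ne
              have hexy : d.edge = s(x, y) := by
                rcases hfm with h1 | h1 <;> rcases hsm with h2 | h2
                · exact absurd (h1.trans h2.symm) hne
                · rw [hfs, h1, h2]
                · rw [hfs, h1, h2]; exact Sym2.eq_swap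
                · exact absurd (h1.trans h2.symm) hne
              have : d.edge ∈ A.edges := he
              rw [hexy] at this
              exact ends_edge_not_mem hA hbig this
            · exact hsn (SimpleGraph.Walk.snd_mem_support_of_mem_edges p (hfs ▸ hpe))
          · exact hf (SimpleGraph.Walk.fst_mem_support_of_mem_edges p (hfs ▸ hpe))

lemma even_cycle_exists {a b v w : V} {p : G.Walk a a} {q : G.Walk b b}
    (hp : p.IsCycle) (hq : q.IsCycle) (hodd : Odd p.length)
    (hvp : v ∈ p.support) (hvq : v ∈ q.support) (hwp : w ∈ p.support) (hwq : w ∈ q.support)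
    (hvw : v ≠ w) (hdiff : ∃ e ∈ q.edges, e ∉ p.edges) :
    ∃ (u : V) (r : G.Walk u u), r.IsCycle ∧ Even r.length := by
  obtain ⟨e0, he0q, he0p⟩ := hdiff
  have hvq' := hvq
  set q1 := q.rotate _ hvq' with hq1def
  have hq1c : q1.IsCycle := hq.rotate hvq'
  have hq1e : ∀ e, e ∈ q1.edges ↔ e ∈ q.edges :=
    fun e => (SimpleGraph.Walk.rotate_edges q _ hvq').perm.mem_iff
  have hwq1 : w ∈ q1.support := (mem_support_rotate hq.not_nil hvq').mpr hwq
  obtain ⟨hA1, hA2, -⟩ := cycle_split hq1c hwq1 (Ne.symm hvw)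
  have hsplit : (q1.takeUntil w hwq1).append (q1.dropUntil w hwq1) = q1 := q1.take_spec hwq1
  have he0 : e0 ∈ (q1.takeUntil w hwq1).edges ∨ e0 ∈ (q1.dropUntil w hwq1).edges := by
    have h' : e0 ∈ q1.edges := (hq1e e0).mpr he0q
    rw [← hsplit, SimpleGraph.Walk.edges_append, List.mem_append] at h'
    exact h'
  have hgood : ∃ (z z' : V) (B : G.Walk z z'), B.IsPath ∧ z ≠ z' ∧ z ∈ p.support ∧
      z' ∈ p.support ∧ (∀ u ∈ B.support, u = z ∨ u = z' ∨ u ∉ p.support) ∧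
      ∀ e ∈ B.edges, e ∉ p.edges := by
    rcases he0 with he0 | he0
    · rcases find_arc p _ (q1.takeUntil w hwq1) le_rfl hA1 hvp hwp with hL | hR
      · exact absurd (hL e0 he0) he0p
      · exact hR
    · rcases find_arc p _ (q1.dropUntil w hwq1) le_rfl hA2 hwp hvp with hL | hR
      · exact absurd (hL e0 he0) he0p
      · exact hR
  obtain ⟨z, z', B, hB, hzz, hzp, hz'p, hBint, hBe⟩ := hgood
  have hzp' := hzp
  set p1 := p.rotate _ hzp' with hp1def
  have hp1c : p1.IsCycle := hp.rotate hzp'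
  have hp1e : ∀ e, e ∈ p1.edges ↔ e ∈ p.edges :=
    fun e => (SimpleGraph.Walk.rotate_edges p _ hzp').perm.mem_iff
  have hp1len : p1.length = p.length := length_rotate p hzp'
  have hp1s : ∀ u, u ∈ p1.support ↔ u ∈ p.support :=
    fun u => mem_support_rotate hp.not_nil hzp'
  have hz'p1 : z' ∈ p1.support := (hp1s z').mpr hz'p
  obtain ⟨hB1, hB2, hdisj12⟩ := cycle_split hp1c hz'p1 (Ne.symm hzz)
  have hlen12 : (p1.takeUntil z' hz'p1).length + (p1.dropUntil z' hz'p1).length = p.length := by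
    have := congrArg SimpleGraph.Walk.length (p1.take_spec hz'p1)
    rwa [SimpleGraph.Walk.length_append, hp1len] at this
  have hB2sub : ∀ u ∈ (p1.dropUntil z' hz'p1).support, u ∈ p.support :=
    fun u hu => (hp1s u).mp (p1.support_dropUntil_subset hz'p1 hu)
  have hB1sub : ∀ u ∈ (p1.takeUntil z' hz'p1).support, u ∈ p.support :=
    fun u hu => (hp1s u).mp (p1.support_takeUntil_subset hz'p1 hu)
  have hB1esub : ∀ e ∈ (p1.takeUntil z' hz'p1).edges, e ∈ p.edges :=
    fun e he => (hp1e e).mp (p1.edges_takeUntil_subset hz'p1 he)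
  have hB2esub : ∀ e ∈ (p1.dropUntil z' hz'p1).edges, e ∈ p.edges :=
    fun e he => (hp1e e).mp (p1.edges_dropUntil_subset hz'p1 he)
  have hc1 : (B.append (p1.dropUntil z' hz'p1)).IsCycle := by
    apply cycle_of_paths hB hB2 hzz
    · intro u hu1 hu2
      rcases hBint u hu1 with h | h | h
      · exact Or.inl h
      · exact Or.inr h
      · exact absurd (hB2sub u hu2) h
    · exact fun e he hmem => hBe e he (hB2esub e hmem)
  have hc2 : ((p1.takeUntil z' hz'p1).append B.reverse).IsCycle := by
    apply cycle_of_paths hB1 hB.reverse hzz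
    · intro u hu1 hu2
      have hu2' : u ∈ B.support := by
        rw [SimpleGraph.Walk.support_reverse] at hu2
        exact List.mem_reverse.mp hu2
      rcases hBint u hu2' with h | h | h
      · exact Or.inl h
      · exact Or.inr h
      · exact absurd (hB1sub u hu1) h
    · intro e he hmem
      rw [SimpleGraph.Walk.edges_reverse] at hmem
      exact hBe e (List.mem_reverse.mp hmem) (hB1esub e he)
  rcases Nat.even_or_odd (B.append (p1.dropUntil z' hz'p1)).length with hev | hod
  · exact ⟨z, _, hc1, hev⟩
  · refine ⟨z, _, hc2, ?_⟩
    rw [SimpleGraph.Walk.length_append, SimpleGraph.Walk.length_reverse]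
    rw [SimpleGraph.Walk.length_append] at hod
    obtain ⟨m, hm⟩ := hodd
    obtain ⟨k, hk⟩ := hod
    exact ⟨((p1.takeUntil z' hz'p1).length + B.length) / 2, by omega⟩

end AuxGraph

end AuxLie

end LiePoset


namespace LiePoset

attribute [local instance] LieRing.ofAssociativeRing

/-- **Proposition.** Let `P` be a connected type-C poset of height one.  If `RG(P)`
contains two (distinct) odd cycles sharing more than one vertex, then in fact `RG(P)`
contains an even cycle, and `g_C(P)` is not contact. -/
theorem not_contact_of_two_odd_cycles_sharing_two_vertices (n : ℕ) (P : TypeCPoset n)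
    (hP : P.HeightOne) (hconn : (TypeCPoset.RG P).Connected)
    (hcyc : ∃ s t : Finset (Sym2 (Pos n)), s ∈ P.cycles ∧ t ∈ P.cycles ∧
      Odd s.card ∧ Odd t.card ∧ s ≠ t ∧
      ∃ v w : Pos n, v ≠ w ∧ v ∈ TypeCPoset.cycleVerts s ∧ v ∈ TypeCPoset.cycleVerts t ∧
        w ∈ TypeCPoset.cycleVerts s ∧ w ∈ TypeCPoset.cycleVerts t)
    (g : LieSubalgebra ℂ (Mat n))
    (hg : g.toSubmodule = Submodule.span ℂ (TypeCPoset.gcSet P)) :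
    (∃ s ∈ P.cycles, Even s.card) ∧ ¬ IsContact ↥g := by
  classical
  obtain ⟨s, t, hs, ht, hsodd, htodd, hst, v, w, hvw, hvs, hvt, hws, hwt⟩ := hcyc
  have hloop : ∀ (s' : Finset (Sym2 (Pos n))), s' ∈ P.cycles →
      v ∈ TypeCPoset.cycleVerts s' → w ∈ TypeCPoset.cycleVerts s' →
      ∃ (a : Pos n) (p : (TypeCPoset.RG P).Walk a a), p.IsCycle ∧ s' = p.edges.toFinset := by
    intro s' hs' hv' hw'
    rcases hs' with ⟨v0, -, rfl⟩ | h
    · exfalso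
      obtain ⟨e1, he1, hve1⟩ := hv'
      obtain ⟨e2, he2, hwe2⟩ := hw'
      rw [Finset.mem_singleton] at he1 he2
      subst he1; subst he2
      have h1 : v = v0 := by simpa using hve1
      have h2 : w = v0 := by simpa using hwe2
      exact hvw (h1.trans h2.symm)
    · exact h
  obtain ⟨a, p, hp, rfl⟩ := hloop s hs hvs hws
  obtain ⟨b, q, hq, rfl⟩ := hloop t ht hvt hwt
  have hcard : ∀ {c : Pos n} (r : (TypeCPoset.RG P).Walk c c), r.IsCycle →
      r.edges.toFinset.card = r.length := by
    intro c r hr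
    rw [List.toFinset_card_of_nodup hr.isCircuit.isTrail.edges_nodup,
      SimpleGraph.Walk.length_edges]
  have hpodd : Odd p.length := by rwa [hcard p hp] at hsodd
  have hqodd : Odd q.length := by rwa [hcard q hq] at htodd
  have hsupp : ∀ {c u : Pos n} (r : (TypeCPoset.RG P).Walk c c),
      u ∈ TypeCPoset.cycleVerts r.edges.toFinset → u ∈ r.support := by
    intro c u r hu
    obtain ⟨e, he, hue⟩ := hu
    exact mem_of_edge (List.mem_toFinset.mp he) hue
  have hvp := hsupp p hvs
  have hwp := hsupp p hws
  have hvq := hsupp q hvt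
  have hwq := hsupp q hwt
  have hcycle : ∃ (u : Pos n) (r : (TypeCPoset.RG P).Walk u u), r.IsCycle ∧ Even r.length := by
    by_cases hqp : ∀ e ∈ q.edges, e ∈ p.edges
    · have hpq : ∃ e ∈ p.edges, e ∉ q.edges := by
        by_contra hc
        push_neg at hc
        apply hst
        apply Finset.ext
        intro e
        simp only [List.mem_toFinset]
        exact ⟨fun h => hc e h, fun h => hqp e h⟩
      exact even_cycle_exists hq hp hqodd hvq hvp hwq hwp hvw hpq
    · push_neg at hqp
      exact even_cycle_exists hp hq hpodd hvp hvq hwp hwq hvw hqp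
  obtain ⟨u, r, hr, hre⟩ := hcycle
  constructor
  · refine ⟨r.edges.toFinset, Or.inr ⟨u, r, hr, rfl⟩, ?_⟩
    rwa [hcard r hr]
  · exact not_contact_of_even_cycle hP r hr hre hg


end LiePoset
end
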